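/- Define γ_q(u) = α·β where α = 1+λ₊+⋯+λ₊^{q−1} and β = 1+λ₋+⋯+λ₋^{q−1}, with λ±(u) the roots of X² − (u²+2)X + 1. Then γ_q(u) is a polynomial with integer coefficients, is monic, and has degree 2|q|−2 for every nonzero integer q (for q < 0 interpret α, β via λ^{−1} appropriately, i.e. α = (λ₊^q − 1)/(λ₊ − 1)). -/
import Mathlib


open Polynomial

/-- `λ₊(u) = ((u²+2) + r)/2` where `r` is a square root of `u⁴+4u²`. -/
noncomputable def lamp (u r : ℂ) : ℂ := (u ^ 2 + 2 + r) / 2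

/-- `λ₋(u) = ((u²+2) - r)/2` where `r` is a square root of `u⁴+4u²`. -/
noncomputable def lamm (u r : ℂ) : ℂ := (u ^ 2 + 2 - r) / 2

/-- `P` is the polynomial `γ_q`, characterized by
`(λ₊ - 1)(λ₋ - 1)·γ_q(u) = (λ₊^q - 1)(λ₋^q - 1)`. -/
def GammaRel (q : ℤ) (P : Polynomial ℤ) : Prop :=
  ∀ u r : ℂ, r ^ 2 = u ^ 4 + 4 * u ^ 2 →
    (lamp u r - 1) * (lamm u r - 1) * (Polynomial.aeval u P : ℂ) =
      ((lamp u r) ^ q - 1) * ((lamm u r) ^ q - 1)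

noncomputable def G : ℕ → Polynomial ℤ
  | 0 => 0
  | 1 => 1
  | (n+2) => (X^2+2) * G (n+1) - G n + 2

lemma G_succ_succ (n : ℕ) : G (n+2) = (X^2+2) * G (n+1) - G n + 2 := rfl

lemma key (n : ℕ) (u a b : ℂ) (hab : a * b = 1) (hs : a + b = u^2 + 2) :
    u^2 * (aeval u (G n)) = a^n + b^n - 2 := by
  induction n using Nat.twoStepInduction with
  | zero => simp [G]; norm_num
  | one => show u^2 * (aeval u (1 : Polynomial ℤ)) = _; simp; linear_combination -hs
  | more n ih1 ih2 =>
    have h3 : aeval u (G (n+2)) = (u^2+2) * aeval u (G (n+1)) - aeval u (G n) + 2 := by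
      rw [G_succ_succ]
      simp [map_add, map_sub, map_mul, map_ofNat]
    rw [h3]
    have e : u^2 * ((u^2+2) * aeval u (G (n+1)) - aeval u (G n) + 2)
        = (u^2+2) * (u^2 * aeval u (G (n+1))) - (u^2 * aeval u (G n)) + 2*u^2 := by ring
    rw [e, ih2, ih1, ← hs]
    linear_combination (a^n + b^n) * hab - 2*hs

lemma monicG : ∀ n : ℕ, (G (n+1)).Monic ∧ (G (n+1)).natDegree = 2*n := by
  have H : ∀ n : ℕ, ((G (n+1)).Monic ∧ (G (n+1)).natDegree = 2*n) ∧ (G n).natDegree ≤ 2*n := by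
    intro n
    induction n using Nat.twoStepInduction with
    | zero => refine ⟨⟨monic_one, ?_⟩, ?_⟩ <;> simp [G]
    | one =>
      have h2 : G 2 = X^2 + 4 := by rw [G_succ_succ]; show _ = _; simp [G]; ring
      refine ⟨⟨?_, ?_⟩, ?_⟩
      · rw [h2]; monicity!
      · rw [h2]; compute_degree!
      · simp [G]
    | more n ih1 ih2 =>
      obtain ⟨⟨hm1, hd1⟩, _⟩ := ih2
      obtain ⟨⟨_, hd0⟩, _⟩ := ih1
      have hre : G (n+3) = (X^2+2) * G (n+2) + (2 - G (n+1)) := by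
        rw [G_succ_succ (n+1)]; ring
      have hmx : ((X:Polynomial ℤ)^2+2).Monic := by monicity!
      have hmul : ((X^2+2) * G (n+2)).Monic := hmx.mul hm1
      have hdmul : ((X^2+2) * G (n+2)).natDegree = 2*(n+2) := by
        rw [hmx.natDegree_mul hm1, hd1]
        have : ((X:Polynomial ℤ)^2+2).natDegree = 2 := by compute_degree!
        rw [this]; ring
      have hq : (2 - G (n+1)).natDegree < ((X^2+2) * G (n+2)).natDegree := by
        rw [hdmul]
        calc (2 - G (n+1)).natDegree ≤ max (2:Polynomial ℤ).natDegree (G (n+1)).natDegree :=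
              natDegree_sub_le _ _
          _ ≤ 2*n + 1 := by simp [hd0]
          _ < 2*(n+2) := by omega
      have hqdeg : (2 - G (n+1)).degree < ((X^2+2) * G (n+2)).degree := by
        rcases eq_or_ne (2 - G (n+1)) 0 with h | h
        · rw [h, degree_zero]
          exact bot_lt_iff_ne_bot.2 (degree_eq_bot.not.2 hmul.ne_zero)
        · rw [degree_eq_natDegree h, degree_eq_natDegree hmul.ne_zero]
          exact_mod_cast hq
      have hmon : (G (n+3)).Monic := by
        rw [hre]; exact hmul.add_of_left hqdeg
      have hdeg : (G (n+3)).natDegree = 2*(n+2) := by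
        rw [hre, natDegree_add_eq_left_of_degree_lt hqdeg, hdmul]
      exact ⟨⟨hmon, hdeg⟩, by simp only [show n+2 = n+1+1 from rfl]; omega⟩
  exact fun n => (H n).1

/-- γ_q = (λ₊^q-1)(λ₋^q-1)/((λ₊-1)(λ₋-1)) is an integer polynomial,
monic of degree 2|q|-2, for every nonzero integer q. -/
theorem stmt_7 (q : ℤ) (hq : q ≠ 0) :
    ∃ P : Polynomial ℤ, GammaRel q P ∧ P.Monic ∧ P.natDegree = 2 * q.natAbs - 2 := by
  set n := q.natAbs with hn
  have hn1 : 1 ≤ n := by omega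
  obtain ⟨m, hm⟩ : ∃ m, n = m + 1 := ⟨n - 1, by omega⟩
  refine ⟨G n, ?_, ?_, ?_⟩
  · intro u r hr
    set a := lamp u r with ha
    set b := lamm u r with hb
    have hab : a * b = 1 := by
      simp only [ha, hb, lamp, lamm]
      field_simp
      linear_combination -hr
    have hs : a + b = u^2 + 2 := by simp only [ha, hb, lamp, lamm]; ring
    have ha0 : a ≠ 0 := left_ne_zero_of_mul_eq_one hab
    have hb0 : b ≠ 0 := right_ne_zero_of_mul_eq_one hab
    have hkey := key n u a b hab hs
    have hqpow : (a^q - 1) * (b^q - 1) = 2 - (a^n + b^n) := by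
      have habq : a^q * b^q = 1 := by rw [← mul_zpow, hab, one_zpow]
      have hpows : a^q + b^q = a^n + b^n := by
        rcases Int.natAbs_eq q with h | h
        · rw [h, zpow_natCast, zpow_natCast]
        · rw [h, zpow_neg, zpow_neg, zpow_natCast, zpow_natCast]
          have h1 : (a^n)⁻¹ = b^n :=
            inv_eq_of_mul_eq_one_left (by rw [← mul_pow, mul_comm b a, hab, one_pow])
          have h2 : (b^n)⁻¹ = a^n :=
            inv_eq_of_mul_eq_one_left (by rw [← mul_pow, hab, one_pow])
          rw [h1, h2]; ring
      linear_combination habq - hpows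
    rw [hqpow]
    have hlhs : (a - 1) * (b - 1) = -u^2 := by linear_combination hab - hs
    rw [hlhs]
    linear_combination -hkey
  · rw [hm]; exact (monicG m).1
  · rw [hm, (monicG m).2]; omega
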